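/- arXiv:2409.06911 — 2 statements merged into one kernel-verified Lean document; each statement's English description precedes it below -/
import Mathlib

section
/- Let V be a subspace of ℝ^q (as a vector space over ℝ) that is closed under entrywise (Hadamard) product and contains the all-ones vector. Then for every v ∈ V and every a ∈ ℝ, the indicator vector v^a defined by (v^a)_x = 1 if v_x = a and 0 otherwise also belongs to V. -/
theorem stmt_0 (q : ℕ) (V : Submodule ℝ (Fin q → ℝ))
    (hmul : ∀ u ∈ V, ∀ v ∈ V, (fun x => u x * v x) ∈ V)
    (hone : (fun _ : Fin q => (1 : ℝ)) ∈ V)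
    (v : Fin q → ℝ) (hv : v ∈ V) (a : ℝ) :
    (fun x => if v x = a then (1 : ℝ) else 0) ∈ V := by
  -- powers of v are in V
  have hpow : ∀ n : ℕ, (fun x => v x ^ n) ∈ V := by
    intro n
    induction n with
    | zero => simpa using hone
    | succ n ih =>
      have := hmul _ ih _ hv
      simpa [pow_succ] using this
  -- polynomial evaluation closed
  have hpoly : ∀ p : Polynomial ℝ, (fun x => p.eval (v x)) ∈ V := by
    intro p
    induction p using Polynomial.induction_on' with
    | add p q hp hq =>
      have := V.add_mem hp hq
      simpa [Polynomial.eval_add, Pi.add_def] using this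
    | monomial n c =>
      have := V.smul_mem c (hpow n)
      simpa [Polynomial.eval_monomial, Pi.smul_def, smul_eq_mul] using this
  -- Lagrange interpolation on nodes = range of v ∪ {a}
  set S : Finset ℝ := insert a (Finset.image v Finset.univ) with hS
  have hinj : Set.InjOn (id : ℝ → ℝ) S := fun x _ y _ h => h
  set p : Polynomial ℝ :=
    Lagrange.interpolate S id (fun t => if t = a then 1 else 0) with hp
  have key : (fun x => if v x = a then (1 : ℝ) else 0) = fun x => p.eval (v x) := by
    funext x
    have hxS : v x ∈ S := by
      simp [hS]
    have h := Lagrange.eval_interpolate_at_node (fun t => if t = a then 1 else 0) hinj hxS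
    simpa [hp] using h.symm
  rw [key]
  exact hpoly p
end

section
/- Let F : (Fin q)^n → ℝ be a symmetric tensor with n ≥ 3 and H ∈ O(q). Define (F*F) : (Fin q)^{2n-2} → ℝ by (F*F)(x,y) = Σ_{z} F(x,z) F(y,z) for x, y ∈ (Fin q)^{n-1}. If the transformed tensor H(F*F) is a generalized equality (i.e., vanishes off the diagonal: it is zero on any input tuple with two unequal coordinates), then HF is also a generalized equality. -/
open Matrix

/-- The action of a `q × q` matrix on an arity-`m` tensor. -/
def act (q m : ℕ) (H : Matrix (Fin q) (Fin q) ℝ) (T : (Fin m → Fin q) → ℝ) :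
    (Fin m → Fin q) → ℝ :=
  fun i => ∑ j : Fin m → Fin q, (∏ k, H (i k) (j k)) * T j

/-- The contraction `F * F` of an arity-`(n+1)` tensor along its last input,
viewed as an arity-`(n + n)` tensor. -/
def starSelf (q n : ℕ) (F : (Fin (n + 1) → Fin q) → ℝ) : (Fin (n + n) → Fin q) → ℝ :=
  fun w => ∑ z : Fin q,
    F (Fin.snoc (fun i => w (Fin.castAdd n i)) z) * F (Fin.snoc (fun i => w (Fin.natAdd n i)) z)

/-- A tensor is a generalized equality if it vanishes on any input with two unequal
coordinates. -/
def GenEq (q m : ℕ) (T : (Fin m → Fin q) → ℝ) : Prop :=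
  ∀ x : Fin m → Fin q, (∃ i j, x i ≠ x j) → T x = 0

def snocE (q n : ℕ) : ((Fin n → Fin q) × Fin q) ≃ (Fin (n + 1) → Fin q) where
  toFun p := Fin.snoc p.1 p.2
  invFun f := ⟨fun i => f (Fin.castSucc i), f (Fin.last n)⟩
  left_inv p := by simp
  right_inv f := Fin.snoc_init_self f

lemma act_symm (q n : ℕ) (H : Matrix (Fin q) (Fin q) ℝ) (F : (Fin (n + 1) → Fin q) → ℝ)
    (hsymm : ∀ σ : Equiv.Perm (Fin (n + 1)), ∀ x, F (x ∘ σ) = F x)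
    (σ : Equiv.Perm (Fin (n + 1))) (x : Fin (n + 1) → Fin q) :
    act q (n + 1) H F (x ∘ σ) = act q (n + 1) H F x := by
  unfold act
  refine Fintype.sum_equiv (Equiv.arrowCongr σ (Equiv.refl (Fin q))) _ _ ?_
  intro j
  show (∏ k, H (x (σ k)) (j k)) * F j
      = (∏ k, H (x k) (j (σ.symm k))) * F (fun k => j (σ.symm k))
  have h1 : F (fun k => j (σ.symm k)) = F j := hsymm σ⁻¹ j
  have h2 : (∏ k, H (x (σ k)) (j k)) = ∏ k, H (x k) (j (σ.symm k)) := by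
    rw [← Equiv.prod_comp σ (fun k => H (x k) (j (σ.symm k)))]
    simp
  rw [h1, h2]

lemma key (q n : ℕ) (H : Matrix (Fin q) (Fin q) ℝ) (hH : Hᵀ * H = 1)
    (F : (Fin (n + 1) → Fin q) → ℝ) (y : Fin n → Fin q) :
    act q (n + n) H (starSelf q n F) (Fin.append y y)
      = ∑ z : Fin q, (act q (n + 1) H F (Fin.snoc y z)) ^ 2 := by
  have hδ : ∀ α β : Fin q, (∑ z : Fin q, H z α * H z β) = if α = β then 1 else 0 := by
    intro α β
    have : (Hᵀ * H) α β = (1 : Matrix (Fin q) (Fin q) ℝ) α β := by rw [hH]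
    simpa [Matrix.mul_apply, Matrix.one_apply, Matrix.transpose_apply] using this
  have hG : ∀ z : Fin q, act q (n + 1) H F (Fin.snoc y z)
      = ∑ a : Fin n → Fin q, ∑ α : Fin q,
          (∏ i, H (y i) (a i)) * H z α * F (Fin.snoc a α) := by
    intro z
    unfold act
    rw [← (snocE q n).sum_comp, Fintype.sum_prod_type]
    refine Finset.sum_congr rfl fun a _ => Finset.sum_congr rfl fun α _ => ?_
    simp only [snocE, Equiv.coe_fn_mk]
    show (∏ k, H ((Fin.snoc y z : Fin (n + 1) → Fin q) k) ((Fin.snoc a α : Fin (n + 1) → Fin q) k))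
        * F (Fin.snoc a α) = _
    rw [Fin.prod_univ_castSucc]
    simp [Fin.snoc_castSucc, Fin.snoc_last]
  have hRHS : ∑ z : Fin q, (act q (n + 1) H F (Fin.snoc y z)) ^ 2
      = ∑ a : Fin n → Fin q, ∑ b : Fin n → Fin q,
          (∏ i, H (y i) (a i)) * (∏ i, H (y i) (b i)) *
            ∑ z : Fin q, F (Fin.snoc a z) * F (Fin.snoc b z) := by
    calc ∑ z : Fin q, (act q (n + 1) H F (Fin.snoc y z)) ^ 2
        = ∑ z : Fin q, ∑ a : Fin n → Fin q, ∑ b : Fin n → Fin q, ∑ α : Fin q, ∑ β : Fin q,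
            ((∏ i, H (y i) (a i)) * H z α * F (Fin.snoc a α)) *
              ((∏ i, H (y i) (b i)) * H z β * F (Fin.snoc b β)) := by
          refine Finset.sum_congr rfl fun z _ => ?_
          rw [sq, hG z, Finset.sum_mul_sum]
          refine Finset.sum_congr rfl fun a _ => Finset.sum_congr rfl fun b _ => ?_
          rw [Finset.sum_mul_sum]
      _ = ∑ a : Fin n → Fin q, ∑ b : Fin n → Fin q, ∑ α : Fin q, ∑ β : Fin q,
            ((∏ i, H (y i) (a i)) * (∏ i, H (y i) (b i)) * (F (Fin.snoc a α) * F (Fin.snoc b β)))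
              * ∑ z : Fin q, H z α * H z β := by
          rw [Finset.sum_comm]
          refine Finset.sum_congr rfl fun a _ => ?_
          rw [Finset.sum_comm]
          refine Finset.sum_congr rfl fun b _ => ?_
          rw [Finset.sum_comm]
          refine Finset.sum_congr rfl fun α _ => ?_
          rw [Finset.sum_comm]
          refine Finset.sum_congr rfl fun β _ => ?_
          rw [Finset.mul_sum]
          exact Finset.sum_congr rfl fun z _ => by ring
      _ = ∑ a : Fin n → Fin q, ∑ b : Fin n → Fin q,
            (∏ i, H (y i) (a i)) * (∏ i, H (y i) (b i)) *
              ∑ z : Fin q, F (Fin.snoc a z) * F (Fin.snoc b z) := by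
          refine Finset.sum_congr rfl fun a _ => Finset.sum_congr rfl fun b _ => ?_
          simp only [hδ, mul_ite, mul_one, mul_zero, Finset.sum_ite_eq, Finset.sum_ite_eq',
            Finset.mem_univ, if_true]
          try rw [Finset.mul_sum]
          try exact Finset.sum_congr rfl fun α _ => by ring
  have hLHS : act q (n + n) H (starSelf q n F) (Fin.append y y)
      = ∑ a : Fin n → Fin q, ∑ b : Fin n → Fin q,
          (∏ i, H (y i) (a i)) * (∏ i, H (y i) (b i)) *
            ∑ z : Fin q, F (Fin.snoc a z) * F (Fin.snoc b z) := by
    unfold act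
    rw [← (Fin.appendEquiv (α := Fin q) n n).sum_comp, Fintype.sum_prod_type]
    refine Finset.sum_congr rfl fun a _ => Finset.sum_congr rfl fun b _ => ?_
    have h1 : ∀ i : Fin n, Fin.append y y (Fin.castAdd n i) = y i := fun i => Fin.append_left _ _ _
    have h2 : ∀ i : Fin n, Fin.append y y (Fin.natAdd n i) = y i := fun i => Fin.append_right _ _ _
    have e1 : (fun i => Fin.append a b (Fin.castAdd n i)) = a := funext fun i => Fin.append_left _ _ _
    have e2 : (fun i => Fin.append a b (Fin.natAdd n i)) = b := funext fun i => Fin.append_right _ _ _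
    have h5 : starSelf q n F ((Fin.appendEquiv n n) (a, b))
        = ∑ z : Fin q, F (Fin.snoc a z) * F (Fin.snoc b z) := by
      show starSelf q n F (Fin.append a b) = _
      unfold starSelf
      simp only [e1, e2]
    rw [h5]
    show (∏ k : Fin (n + n), H (Fin.append y y k) (Fin.append a b k)) * _ = _
    rw [Fin.prod_univ_add]
    simp only [h1, h2]
    congr 2
    · exact Finset.prod_congr rfl fun i _ => by rw [Fin.append_left]
    · exact Finset.prod_congr rfl fun i _ => by rw [Fin.append_right]
  rw [hLHS, hRHS]

theorem stmt_14 (q n : ℕ) (hn : 2 ≤ n) (F : (Fin (n + 1) → Fin q) → ℝ)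
    (hsymm : ∀ σ : Equiv.Perm (Fin (n + 1)), ∀ x, F (x ∘ σ) = F x)
    (H : Matrix (Fin q) (Fin q) ℝ) (hH : Hᵀ * H = 1)
    (hgen : GenEq q (n + n) (act q (n + n) H (starSelf q n F))) :
    GenEq q (n + 1) (act q (n + 1) H F) := by
  rintro x ⟨i0, j0, hx⟩
  have hij : i0 ≠ j0 := fun h => hx (by rw [h])
  -- two positions in Fin n (as castSucc in Fin (n+1))
  have h0 : (0 : ℕ) < n := by omega
  have h1 : (1 : ℕ) < n := by omega
  set p₁ : Fin (n + 1) := Fin.castSucc ⟨0, h0⟩ with hp₁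
  set p₂ : Fin (n + 1) := Fin.castSucc ⟨1, h1⟩ with hp₂
  have hp12 : p₁ ≠ p₂ := by simp [hp₁, hp₂, Fin.ext_iff]
  -- build permutation σ with σ p₁ = i0, σ p₂ = j0
  set τ : Equiv.Perm (Fin (n + 1)) := Equiv.swap p₁ i0 with hτ
  set j' : Fin (n + 1) := τ j0 with hj'
  have hj'p₁ : j' ≠ p₁ := by
    intro h
    apply hij
    have : τ j' = τ p₁ := by rw [h]
    rw [hj', Equiv.swap_apply_self, Equiv.swap_apply_left] at this
    exact this.symm
  set σ : Equiv.Perm (Fin (n + 1)) := (Equiv.swap p₂ j').trans τ with hσ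
  have hσ1 : σ p₁ = i0 := by
    rw [hσ]
    simp only [Equiv.trans_apply]
    rw [Equiv.swap_apply_of_ne_of_ne hp12 hj'p₁.symm, hτ, Equiv.swap_apply_left]
  have hσ2 : σ p₂ = j0 := by
    rw [hσ]
    simp only [Equiv.trans_apply]
    rw [Equiv.swap_apply_left, hj', Equiv.swap_apply_self]
  -- define y and z
  set y : Fin n → Fin q := fun i => x (σ (Fin.castSucc i)) with hy
  set z0 : Fin q := x (σ (Fin.last n)) with hz0
  have hxy : x ∘ σ = Fin.snoc y z0 := by
    funext k
    refine Fin.lastCases ?_ ?_ k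
    · simp [hy, hz0]
    · intro i; simp [hy]
  have hyne : y ⟨0, h0⟩ ≠ y ⟨1, h1⟩ := by
    show x (σ p₁) ≠ x (σ p₂)
    rw [hσ1, hσ2]; exact hx
  -- append y y has unequal coordinates
  have hzero : act q (n + n) H (starSelf q n F) (Fin.append y y) = 0 := by
    apply hgen
    refine ⟨Fin.castAdd n ⟨0, h0⟩, Fin.castAdd n ⟨1, h1⟩, ?_⟩
    rw [Fin.append_left, Fin.append_left]
    exact hyne
  rw [key q n H hH F y] at hzero
  have hz : act q (n + 1) H F (Fin.snoc y z0) = 0 := by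
    have hz' : (act q (n + 1) H F (Fin.snoc y z0)) ^ 2 = 0 :=
      (Finset.sum_eq_zero_iff_of_nonneg (fun z _ => sq_nonneg _)).mp hzero z0 (Finset.mem_univ _)
    exact sq_eq_zero_iff.mp hz'
  calc act q (n + 1) H F x = act q (n + 1) H F (x ∘ σ) := (act_symm q n H F hsymm σ x).symm
    _ = 0 := by rw [hxy]; exact hz
end
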